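/- For the d-dimensional isotropic state ρ^iso(F) = F|Φ⁺⟩⟨Φ⁺| + ((1−F)/(d²−1))(I_{d²} − |Φ⁺⟩⟨Φ⁺|) with Φ⁺ = d^{−1/2} Σ_i |ii⟩: if F > 1/d then ρ^iso(F) is entangled. -/

import Mathlib

open Matrix BigOperators Kronecker
open scoped ComplexOrder

/-- The rank-one projector `|v⟩⟨v|`. -/
noncomputable def dyad {α : Type*} [Fintype α] (v : α → ℂ) : Matrix α α ℂ :=
  Matrix.vecMulVec v (star v)

/-- Partial trace over the second tensor factor. -/
noncomputable def ptraceB {m n : ℕ} (ρ : Matrix (Fin m × Fin n) (Fin m × Fin n) ℂ) :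
    Matrix (Fin m) (Fin m) ℂ := fun i j => ∑ k : Fin n, ρ (i, k) (j, k)

/-- Partial trace over the first tensor factor. -/
noncomputable def ptraceA {m n : ℕ} (ρ : Matrix (Fin m × Fin n) (Fin m × Fin n) ℂ) :
    Matrix (Fin n) (Fin n) ℂ := fun i j => ∑ k : Fin m, ρ (k, i) (k, j)

/-- A bipartite state is separable if it is a finite convex combination of
tensor products of density matrices. -/
def SepState {m n : ℕ} (ρ : Matrix (Fin m × Fin n) (Fin m × Fin n) ℂ) : Prop :=
  ∃ (d : ℕ) (q : Fin d → ℝ) (σ : Fin d → Matrix (Fin m) (Fin m) ℂ)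
    (τ : Fin d → Matrix (Fin n) (Fin n) ℂ),
    (∀ i, 0 ≤ q i) ∧ (∑ i, q i = 1) ∧
    (∀ i, (σ i).PosSemidef ∧ (σ i).trace = 1) ∧
    (∀ i, (τ i).PosSemidef ∧ (τ i).trace = 1) ∧
    ρ = ∑ i, (q i : ℂ) • (σ i ⊗ₖ τ i)

open Classical in
/-- Eigenvalues of a Hermitian matrix arranged in non-increasing order
(`eigsDesc A 0` is the largest eigenvalue); junk value otherwise. -/
noncomputable def eigsDesc {k : ℕ} (A : Matrix (Fin k) (Fin k) ℂ) : Fin k → ℝ :=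
  if h : A.IsHermitian then fun i => (h.eigenvalues ∘ Tuple.sort h.eigenvalues) i.rev
  else fun _ => 0

/-- The `i`-th largest singular value of an `m × n` complex matrix,
`i : Fin (min m n)`. -/
noncomputable def singVal {m n : ℕ} (A : Matrix (Fin m) (Fin n) ℂ) (i : Fin (min m n)) : ℝ :=
  Real.sqrt (eigsDesc (Aᴴ * A) (Fin.castLE (min_le_right m n) i))

open Classical in
/-- The largest eigenvalue of a Hermitian matrix; junk value otherwise. -/
noncomputable def lamMax {α : Type*} [Fintype α] [DecidableEq α] (A : Matrix α α ℂ) : ℝ :=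
  if h : A.IsHermitian then ⨆ i, h.eigenvalues i else 0

/-- Frobenius (Hilbert–Schmidt) norm of a matrix. -/
noncomputable def frobNorm {m n : ℕ} (A : Matrix (Fin m) (Fin n) ℂ) : ℝ :=
  Real.sqrt ((Aᴴ * A).trace.re)

/-- The maximally entangled state `Φ⁺` in dimension `d`. -/
noncomputable def phiPlusd (d : ℕ) : Fin d × Fin d → ℂ := fun x =>
  if x.1 = x.2 then ((Real.sqrt d : ℝ) : ℂ)⁻¹ else 0



noncomputable def fidW {d : ℕ} (ρ : Matrix (Fin d × Fin d) (Fin d × Fin d) ℂ) : ℂ :=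
  star (phiPlusd d) ⬝ᵥ ρ.mulVec (phiPlusd d)

lemma fidW_eq {d : ℕ} (ρ : Matrix (Fin d × Fin d) (Fin d × Fin d) ℂ) :
    fidW ρ = ∑ p, ∑ q, star (phiPlusd d p) * ρ p q * phiPlusd d q := by
  simp [fidW, dotProduct, Matrix.mulVec, Finset.mul_sum, mul_assoc]

lemma fidW_add {d : ℕ} (A B : Matrix (Fin d × Fin d) (Fin d × Fin d) ℂ) :
    fidW (A + B) = fidW A + fidW B := by
  simp [fidW, Matrix.add_mulVec, dotProduct_add]

lemma fidW_smul {d : ℕ} (c : ℂ) (A : Matrix (Fin d × Fin d) (Fin d × Fin d) ℂ) :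
    fidW (c • A) = c * fidW A := by
  simp [fidW, Matrix.smul_mulVec, dotProduct_smul]

lemma fidW_sub {d : ℕ} (A B : Matrix (Fin d × Fin d) (Fin d × Fin d) ℂ) :
    fidW (A - B) = fidW A - fidW B := by
  simp [fidW, Matrix.sub_mulVec, dotProduct_sub]

lemma fidW_sum {d n : ℕ} (c : Fin n → ℂ) (K : Fin n → Matrix (Fin d × Fin d) (Fin d × Fin d) ℂ) :
    fidW (∑ t, c t • K t) = ∑ t, c t * fidW (K t) := by
  calc fidW (∑ t, c t • K t) = ∑ t, fidW (c t • K t) :=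
        map_sum (AddMonoidHom.mk' fidW fidW_add) _ _
    _ = ∑ t, c t * fidW (K t) := Finset.sum_congr rfl fun t _ => fidW_smul _ _

lemma fidW_kron {d : ℕ} (σ τ : Matrix (Fin d) (Fin d) ℂ) :
    fidW (σ ⊗ₖ τ) = ((d : ℂ))⁻¹ * ∑ i, ∑ j, σ i j * τ i j := by
  have hc : (((Real.sqrt d : ℝ) : ℂ))⁻¹ * ((Real.sqrt d : ℝ) : ℂ)⁻¹ = ((d:ℂ))⁻¹ := by
    rw [← mul_inv]; congr 1; norm_cast; rw [Real.mul_self_sqrt (Nat.cast_nonneg d)]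
  simp only [fidW_eq, Fintype.sum_prod_type, phiPlusd, Matrix.kroneckerMap_apply, apply_ite,
    star_zero, star_inv₀, Complex.star_def, Complex.conj_ofReal, ite_mul, mul_ite, zero_mul,
    mul_zero, Finset.sum_ite_irrel, Finset.sum_const_zero, Finset.sum_ite_eq,
    Finset.sum_ite_eq', Finset.mem_univ, if_true]
  rw [Finset.mul_sum]
  refine Finset.sum_congr rfl fun i _ => ?_
  rw [Finset.mul_sum]
  refine Finset.sum_congr rfl fun j _ => ?_
  rw [← hc]; ring

lemma phi_norm {d : ℕ} (hd : 0 < d) : star (phiPlusd d) ⬝ᵥ phiPlusd d = 1 := by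
  have hd' : (d : ℝ) ≠ 0 := by positivity
  simp only [dotProduct, Pi.star_apply, phiPlusd, Fintype.sum_prod_type, apply_ite,
    star_zero, ite_mul, mul_ite, zero_mul, mul_zero, star_inv₀, Complex.star_def,
    Complex.conj_ofReal, Finset.sum_ite_eq', Finset.mem_univ, if_true]
  rw [← mul_inv]
  norm_cast
  rw [Real.mul_self_sqrt (by positivity)]
  simp
  field_simp

lemma fidW_dyad {d : ℕ} (hd : 0 < d) : fidW (dyad (phiPlusd d)) = 1 := by
  have h := phi_norm hd
  simp only [fidW, dyad]
  rw [show (Matrix.vecMulVec (phiPlusd d) (star (phiPlusd d))).mulVec (phiPlusd d)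
      = (star (phiPlusd d) ⬝ᵥ phiPlusd d) • phiPlusd d from ?_, h]
  · simp [h]
  · ext p
    simp [Matrix.mulVec, Matrix.vecMulVec_apply, dotProduct, Finset.mul_sum, mul_comm,
      mul_assoc, mul_left_comm]

lemma fidW_one {d : ℕ} (hd : 0 < d) : fidW (1 : Matrix (Fin d × Fin d) (Fin d × Fin d) ℂ) = 1 := by
  simp [fidW, Matrix.one_mulVec, phi_norm hd]


lemma swap4 {d : ℕ} (f : Fin d → Fin d → Fin d → Fin d → ℂ) :
    (∑ i, ∑ j, ∑ k, ∑ l, f i j k l) = ∑ k, ∑ l, ∑ i, ∑ j, f i j k l := by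
  calc (∑ i, ∑ j, ∑ k, ∑ l, f i j k l)
      = ∑ i, ∑ k, ∑ j, ∑ l, f i j k l :=
        Finset.sum_congr rfl fun i _ => Finset.sum_comm
    _ = ∑ k, ∑ i, ∑ j, ∑ l, f i j k l := Finset.sum_comm
    _ = ∑ k, ∑ i, ∑ l, ∑ j, f i j k l :=
        Finset.sum_congr rfl fun k _ => Finset.sum_congr rfl fun i _ => Finset.sum_comm
    _ = ∑ k, ∑ l, ∑ i, ∑ j, f i j k l :=
        Finset.sum_congr rfl fun k _ => Finset.sum_comm

lemma key_bound {d : ℕ} {σ τ : Matrix (Fin d) (Fin d) ℂ} (hσ : σ.PosSemidef) (hτ : τ.PosSemidef)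
    (tσ : σ.trace = 1) (tτ : τ.trace = 1) :
    (∑ i, ∑ j, σ i j * τ i j).re ≤ 1 := by
  obtain ⟨A, rfl⟩ : ∃ A : Matrix (Fin d) (Fin d) ℂ, σ = Aᴴ * A := by
    classical
    open scoped MatrixOrder in
    exact CStarAlgebra.nonneg_iff_eq_star_mul_self.mp hσ.nonneg
  obtain ⟨B, rfl⟩ : ∃ B : Matrix (Fin d) (Fin d) ℂ, τ = Bᴴ * B := by
    classical
    open scoped MatrixOrder in
    exact CStarAlgebra.nonneg_iff_eq_star_mul_self.mp hτ.nonneg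
  have hS : (∑ i, ∑ j, (Aᴴ * A) i j * (Bᴴ * B) i j)
      = ∑ k, ∑ l, (Complex.normSq (∑ j, A k j * B l j) : ℂ) := by
    calc (∑ i, ∑ j, (Aᴴ * A) i j * (Bᴴ * B) i j)
        = ∑ i, ∑ j, ∑ k, ∑ l, star (A k i) * A k j * (star (B l i) * B l j) := by
          refine Finset.sum_congr rfl fun i _ => Finset.sum_congr rfl fun j _ => ?_
          simp only [Matrix.mul_apply, Matrix.conjTranspose_apply, Finset.sum_mul_sum]
      _ = ∑ k, ∑ l, ∑ i, ∑ j, star (A k i) * A k j * (star (B l i) * B l j) := swap4 _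
      _ = ∑ k, ∑ l, (Complex.normSq (∑ j, A k j * B l j) : ℂ) := by
          refine Finset.sum_congr rfl fun k _ => Finset.sum_congr rfl fun l _ => ?_
          have h1 : ((starRingEnd ℂ) (∑ j, A k j * B l j)) * (∑ j, A k j * B l j)
              = ∑ i, ∑ j, star (A k i) * A k j * (star (B l i) * B l j) := by
            rw [map_sum, Finset.sum_mul_sum]
            refine Finset.sum_congr rfl fun i _ => Finset.sum_congr rfl fun j _ => ?_
            simp only [_root_.map_mul, Complex.star_def]; ring
          rw [Complex.normSq_eq_conj_mul_self, h1]
  -- now the real-part computation and Cauchy–Schwarz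
  have trA : (∑ k, ∑ i, Complex.normSq (A k i)) = 1 := by
    have := congrArg Complex.re tσ
    rw [Matrix.trace] at this
    simp only [Matrix.diag_apply, Matrix.mul_apply, Matrix.conjTranspose_apply,
      Complex.re_sum, Complex.one_re] at this
    rw [← this, Finset.sum_comm]
    refine Finset.sum_congr rfl fun k _ => Finset.sum_congr rfl fun i _ => ?_
    simp [Complex.star_def, ← Complex.normSq_eq_conj_mul_self]
  have trB : (∑ l, ∑ i, Complex.normSq (B l i)) = 1 := by
    have := congrArg Complex.re tτ
    rw [Matrix.trace] at this
    simp only [Matrix.diag_apply, Matrix.mul_apply, Matrix.conjTranspose_apply,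
      Complex.re_sum, Complex.one_re] at this
    rw [← this, Finset.sum_comm]
    refine Finset.sum_congr rfl fun k _ => Finset.sum_congr rfl fun i _ => ?_
    simp [Complex.star_def, ← Complex.normSq_eq_conj_mul_self]
  have cs : ∀ k l, Complex.normSq (∑ j, A k j * B l j)
      ≤ (∑ j, Complex.normSq (A k j)) * (∑ j, Complex.normSq (B l j)) := by
    intro k l
    have h1 : ‖∑ j, A k j * B l j‖
        ≤ ∑ j, ‖A k j‖ * ‖B l j‖ := by
      refine (norm_sum_le _ _).trans ?_
      exact le_of_eq (Finset.sum_congr rfl fun j _ => norm_mul _ _)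
    calc Complex.normSq (∑ j, A k j * B l j)
        = ‖∑ j, A k j * B l j‖ ^ 2 := (Complex.sq_norm _).symm
      _ ≤ (∑ j, ‖A k j‖ * ‖B l j‖) ^ 2 := by
          exact pow_le_pow_left₀ (norm_nonneg _) h1 2
      _ ≤ (∑ j, ‖A k j‖ ^ 2) * (∑ j, ‖B l j‖ ^ 2) :=
          Finset.sum_mul_sq_le_sq_mul_sq _ _ _
      _ = (∑ j, Complex.normSq (A k j)) * (∑ j, Complex.normSq (B l j)) := by
          simp [Complex.sq_norm]
  rw [hS]
  simp only [Complex.re_sum, Complex.ofReal_re]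
  calc (∑ k, ∑ l, Complex.normSq (∑ j, A k j * B l j))
      ≤ ∑ k, ∑ l, (∑ j, Complex.normSq (A k j)) * (∑ j, Complex.normSq (B l j)) :=
        Finset.sum_le_sum fun k _ => Finset.sum_le_sum fun l _ => cs k l
    _ = (∑ k, ∑ j, Complex.normSq (A k j)) * (∑ l, ∑ j, Complex.normSq (B l j)) :=
        (Finset.sum_mul_sum _ _ _ _).symm
    _ = 1 := by rw [trA, trB]; norm_num

theorem stmt14 (d : ℕ) (hd : 0 < d) (F : ℝ) (hF0 : 1 / (d ^ 2 : ℝ) ≤ F) (hF1 : F ≤ 1)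
    (hF : 1 / (d : ℝ) < F) :
    ¬ SepState ((F : ℂ) • dyad (phiPlusd d) +
        (((1 - F) / ((d : ℝ) ^ 2 - 1) : ℝ) : ℂ) • (1 - dyad (phiPlusd d))) := by
  intro hsep
  obtain ⟨n, q, σ, τ, hq0, hq1, hσ, hτ, hρ⟩ := hsep
  have hiso : fidW ((F : ℂ) • dyad (phiPlusd d) +
      (((1 - F) / ((d : ℝ) ^ 2 - 1) : ℝ) : ℂ) • (1 - dyad (phiPlusd d))) = (F : ℂ) := by
    rw [fidW_add, fidW_smul, fidW_smul, fidW_sub, fidW_one hd, fidW_dyad hd]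
    ring
  have hsum : fidW ((F : ℂ) • dyad (phiPlusd d) +
      (((1 - F) / ((d : ℝ) ^ 2 - 1) : ℝ) : ℂ) • (1 - dyad (phiPlusd d)))
      = ∑ t, (q t : ℂ) * ((d : ℂ)⁻¹ * ∑ i, ∑ j, σ t i j * τ t i j) := by
    rw [hρ, fidW_sum]
    exact Finset.sum_congr rfl fun t _ => by rw [fidW_kron]
  have hre : F = ∑ t, q t * (d : ℝ)⁻¹ * (∑ i, ∑ j, σ t i j * τ t i j).re := by
    have h2 := congrArg Complex.re (hiso.symm.trans hsum)
    rw [Complex.ofReal_re, Complex.re_sum] at h2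
    rw [h2]
    refine Finset.sum_congr rfl fun t _ => ?_
    rw [show ((q t : ℂ) * ((d : ℂ)⁻¹ * ∑ i, ∑ j, σ t i j * τ t i j))
        = ((q t * (d:ℝ)⁻¹ : ℝ) : ℂ) * ∑ i, ∑ j, σ t i j * τ t i j by push_cast; ring]
    rw [Complex.re_ofReal_mul]
  have hdpos : (0:ℝ) < (d:ℝ) := by exact_mod_cast hd
  have hbound : F ≤ (d : ℝ)⁻¹ := by
    rw [hre]
    calc (∑ t, q t * (d : ℝ)⁻¹ * (∑ i, ∑ j, σ t i j * τ t i j).re)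
        ≤ ∑ t, q t * (d : ℝ)⁻¹ * 1 := by
          refine Finset.sum_le_sum fun t _ => ?_
          exact mul_le_mul_of_nonneg_left
            (key_bound (hσ t).1 (hτ t).1 (hσ t).2 (hτ t).2)
            (mul_nonneg (hq0 t) (by positivity))
      _ = (d : ℝ)⁻¹ := by simp only [mul_one, ← Finset.sum_mul, hq1, one_mul]
  rw [one_div] at hF
  linarith
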